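/- For every fixed real number D > 0, the function d ↦ (cosh D · cosh d − cosh(2D))/(sinh D · sinh d) is strictly monotone increasing on (0, ∞). -/

import Mathlib

/-- For every fixed `D > 0`, the function
`d ↦ (cosh D · cosh d − cosh 2D)/(sinh D · sinh d)` is strictly monotone increasing on
`(0, ∞)`. -/
theorem stmt9 (D : ℝ) (hD : 0 < D) :
    StrictMonoOn
      (fun d : ℝ =>
        (Real.cosh D * Real.cosh d - Real.cosh (2 * D)) / (Real.sinh D * Real.sinh d))
      (Set.Ioi 0) := by
  have hC : 0 < Real.sinh D := Real.sinh_pos_iff.2 hD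
  have hB : Real.cosh D < Real.cosh (2 * D) := by
    rw [Real.cosh_lt_cosh]
    rw [abs_of_pos hD, abs_of_pos (by linarith)]
    linarith
  apply strictMonoOn_of_deriv_pos (convex_Ioi 0)
  · apply ContinuousOn.div
    · fun_prop
    · fun_prop
    · intro x hx
      exact ne_of_gt (mul_pos hC (Real.sinh_pos_iff.2 hx))
  · intro x hx
    rw [interior_Ioi] at hx
    have hsx : 0 < Real.sinh x := Real.sinh_pos_iff.2 hx
    have h1 : HasDerivAt (fun d => Real.cosh D * Real.cosh d - Real.cosh (2 * D))
        (Real.cosh D * Real.sinh x) x :=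
      ((Real.hasDerivAt_cosh x).const_mul _).sub_const _
    have h2 : HasDerivAt (fun d => Real.sinh D * Real.sinh d)
        (Real.sinh D * Real.cosh x) x :=
      (Real.hasDerivAt_sinh x).const_mul _
    have h : HasDerivAt (fun d : ℝ => (Real.cosh D * Real.cosh d - Real.cosh (2 * D)) / (Real.sinh D * Real.sinh d)) _ x := h1.div h2 (ne_of_gt (mul_pos hC hsx))
    rw [h.deriv]
    apply div_pos
    · have hid := Real.cosh_sq_sub_sinh_sq x
      have hcx : 1 ≤ Real.cosh x := Real.one_le_cosh x
      have hkey : Real.cosh D < Real.cosh (2 * D) * Real.cosh x := by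
        nlinarith [Real.cosh_pos (2 * D)]
      have hnum : Real.cosh D * Real.sinh x * (Real.sinh D * Real.sinh x) -
          (Real.cosh D * Real.cosh x - Real.cosh (2 * D)) * (Real.sinh D * Real.cosh x) =
          Real.sinh D * (Real.cosh (2 * D) * Real.cosh x - Real.cosh D) := by
        linear_combination (-Real.sinh D * Real.cosh D) * hid
      rw [hnum]
      exact mul_pos hC (by linarith)
    · positivity
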